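/- Let λ := (e² + √(e⁴ − 4))/2, the unique root greater than 1 of the equation λ = e^{−2}(λ² + 1). Let n ≥ 1, let l ≥ 3 be an integer, and let u : {z ∈ ℂ : e^{−l} < |z| < 1} → ℂⁿ be a holomorphic map whose energies E_k(u) are finite for all 0 ≤ k ≤ l−1. Then for every integer k with 1 ≤ k ≤ l−2 one has E_k(u) ≤ λ^{−(k−1)} · E₁(u) + λ^{−(l−2−k)} · E_{l−2}(u). -/

import Mathlib

open MeasureTheory Complex ENNReal

/-- The annulus `A_k = {z : e^{-(k+1)} < |z| < e^{-k}}`. -/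
def annulusAk (k : ℕ) : Set ℂ :=
  {z : ℂ | Real.exp (-((k : ℝ) + 1)) < ‖z‖ ∧ ‖z‖ < Real.exp (-(k : ℝ))}

/-- The energy `E_k(u) = ∫_{A_k} ‖u'‖² dA` of a map `u : ℂ → ℂⁿ` on the annulus `A_k`. -/
noncomputable def annEnergy (n : ℕ) (u : ℂ → EuclideanSpace ℂ (Fin n)) (k : ℕ) : ℝ≥0∞ :=
  ∫⁻ z in annulusAk k, (‖deriv u z‖₊ : ℝ≥0∞) ^ 2

/-- `λ = (e² + √(e⁴ - 4))/2`, the root `> 1` of `λ = e^{-2}(λ² + 1)`. -/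
noncomputable def lamConst : ℝ := (Real.exp 2 + Real.sqrt (Real.exp 4 - 4)) / 2

open Set Metric intervalIntegral Real AddCircle

noncomputable section


lemma lintegral_polar_real (g : ℝ × ℝ → ℝ≥0∞) :
    ∫⁻ p, g p = ∫⁻ p in polarCoord.target, ENNReal.ofReal p.1 * g (polarCoord.symm p) := by
  set B : ℝ × ℝ → ℝ × ℝ →L[ℝ] ℝ × ℝ := fun p =>
    LinearMap.toContinuousLinearMap (Matrix.toLin (Module.Basis.finTwoProd ℝ) (Module.Basis.finTwoProd ℝ)
      !![Real.cos p.2, -p.1 * Real.sin p.2; Real.sin p.2, p.1 * Real.cos p.2])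
  have A : ∀ p ∈ polarCoord.symm.source, HasFDerivAt polarCoord.symm (B p) p := fun p _ =>
    hasFDerivAt_polarCoord_symm p
  have B_det : ∀ p, (B p).det = p.1 := by
    intro p
    conv_rhs => rw [← one_mul p.1, ← Real.cos_sq_add_sin_sq p.2]
    simp only [B, neg_mul, LinearMap.det_toContinuousLinearMap, LinearMap.det_toLin,
      Matrix.det_fin_two_of, sub_neg_eq_add]
    ring
  calc
    ∫⁻ p, g p = ∫⁻ p in polarCoord.source, g p := by
      rw [← setLIntegral_univ]
      exact (setLIntegral_congr polarCoord_source_ae_eq_univ.symm)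
    _ = ∫⁻ p in polarCoord.target, ENNReal.ofReal |(B p).det| * g (polarCoord.symm p) := by
      rw [← polarCoord.symm_image_target_eq_source]
      refine lintegral_image_eq_lintegral_abs_det_fderiv_mul volume
        polarCoord.open_target.measurableSet
        (fun p hp => ((A p (polarCoord.symm_source ▸ hp)).hasFDerivWithinAt)) ?_ g
      exact polarCoord.symm.injOn
    _ = ∫⁻ p in polarCoord.target, ENNReal.ofReal p.1 * g (polarCoord.symm p) := by
      refine setLIntegral_congr_fun_ae polarCoord.open_target.measurableSet
        (Filter.Eventually.of_forall fun p hp => ?_)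
      rw [B_det, abs_of_pos hp.1]

lemma lintegral_polar_complex (h : ℂ → ℝ≥0∞) :
    ∫⁻ z, h z
      = ∫⁻ p in (Set.Ioi (0:ℝ) ×ˢ Set.Ioo (-Real.pi) Real.pi),
          ENNReal.ofReal p.1 * h (Complex.polarCoord.symm p) := by
  have h1 : ∫⁻ z, h z = ∫⁻ p : ℝ × ℝ, h (measurableEquivRealProd.symm p) := by
    rw [← Complex.volume_preserving_equiv_real_prod.map_eq,
      MeasureTheory.lintegral_map_equiv]
    simp
  rw [h1, lintegral_polar_real]
  rfl

lemma polarCoord_symm_eq_circleMap (r θ : ℝ) :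
    Complex.polarCoord.symm (r, θ) = circleMap 0 r θ := by
  simp [circleMap, Complex.exp_mul_I, Complex.polarCoord_symm_apply]


/-- the ambient open annulus -/
def bigAnn (a : ℝ) : Set ℂ := {z : ℂ | a < ‖z‖ ∧ ‖z‖ < 1}

lemma isOpen_bigAnn (a : ℝ) : IsOpen (bigAnn a) := by
  have : bigAnn a = ((‖·‖ : ℂ → ℝ) ⁻¹' (Set.Ioi a)) ∩ ((‖·‖ : ℂ → ℝ) ⁻¹' (Set.Iio 1)) := by
    ext z; simp [bigAnn, Set.mem_setOf_eq]
  rw [this]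
  exact (isOpen_Ioi.preimage continuous_norm).inter
    (isOpen_Iio.preimage continuous_norm)

variable {a : ℝ}

lemma circleMap_mem_bigAnn {r : ℝ} (ha : a < r) (hr1 : r < 1) (hr0 : 0 < r) (θ : ℝ) :
    circleMap 0 r θ ∈ bigAnn a := by
  constructor <;> rw [norm_circleMap_zero, abs_of_pos hr0] <;> assumption

/-- invariance of circle integrals of `z^m * g z` in the annulus -/
lemma circleInt_invariant {g : ℂ → ℂ} (hg : DifferentiableOn ℂ g (bigAnn a))
    (ha : 0 < a) (m : ℤ) {r R : ℝ} (har : a < r) (hrR : r ≤ R)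
    (hR1 : R < 1) :
    (∮ z in C(0, R), z ^ m * g z) = ∮ z in C(0, r), z ^ m * g z := by
  have hr0 : 0 < r := ha.trans har
  refine circleIntegral_eq_of_differentiable_on_annulus_off_countable hr0 hrR
    Set.countable_empty ?_ ?_
  · have hsub : Metric.closedBall (0:ℂ) R \ Metric.ball 0 r ⊆ bigAnn a := by
      intro z hz
      simp only [Metric.mem_closedBall, Metric.mem_ball, Set.mem_diff, dist_zero_right, not_lt] at hz
      exact ⟨lt_of_lt_of_le har hz.2, lt_of_le_of_lt hz.1 hR1⟩
    refine ContinuousOn.mul (fun z hz => ?_) (hg.continuousOn.mono hsub)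
    have hz0 : z ≠ 0 := by
      intro h
      have := hsub hz
      rw [h] at this
      simp [bigAnn] at this
      linarith
    exact (differentiableAt_zpow.mpr (Or.inl hz0)).continuousAt.continuousWithinAt
  · intro z hz
    simp only [Metric.mem_ball, Metric.mem_closedBall, Set.mem_diff, dist_zero_right, not_le,
      Set.mem_empty_iff_false, not_false_iff, and_true] at hz
    have hz0 : z ≠ 0 := by
      intro h; rw [h] at hz; simp at hz; nlinarith [hz.2]
    have hzA : z ∈ bigAnn a := ⟨har.trans hz.2, hz.1.trans hR1⟩
    exact (differentiableAt_zpow.mpr (Or.inl hz0)).mul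
      (hg.differentiableAt ((isOpen_bigAnn a).mem_nhds hzA))

/-- circle integral of a function with a primitive on the annulus vanishes -/
lemma circleInt_of_primitive_eq_zero {P F : ℂ → ℂ}
    (hP : ∀ z ∈ bigAnn a, HasDerivAt P (F z) z) (hFc : ContinuousOn F (bigAnn a))
    {r : ℝ} (har : a < r) (hr1 : r < 1) (hr0 : 0 < r) :
    (∮ z in C(0, r), F z) = 0 := by
  have hmem : ∀ θ : ℝ, circleMap 0 r θ ∈ bigAnn a :=
    circleMap_mem_bigAnn har hr1 hr0
  have hcont : Continuous fun θ : ℝ => deriv (circleMap 0 r) θ • F (circleMap 0 r θ) := by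
    simp only [deriv_circleMap]
    exact ((continuous_circleMap 0 r).mul continuous_const).mul
      (hFc.comp_continuous (continuous_circleMap 0 r) hmem)
  have key : ∀ θ ∈ Set.uIcc 0 (2 * π), HasDerivAt (fun t => P (circleMap 0 r t))
      (deriv (circleMap 0 r) θ • F (circleMap 0 r θ)) θ := by
    intro θ _
    have h1 : HasDerivAt (circleMap 0 r) (circleMap 0 r θ * Complex.I) θ :=
      hasDerivAt_circleMap 0 r θ
    have h2 := (hP _ (hmem θ)).comp θ h1
    simpa [deriv_circleMap, mul_comm, smul_eq_mul, Function.comp_def] using h2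
  rw [circleIntegral]
  rw [intervalIntegral.integral_eq_sub_of_hasDerivAt key (hcont.intervalIntegrable 0 (2 * π))]
  have : circleMap 0 r (2 * π) = circleMap 0 r 0 := by
    have := periodic_circleMap 0 r 0
    simpa using this
  rw [this, sub_self]



lemma fact_two_pi : Fact (0 < 2 * π) := ⟨Real.two_pi_pos⟩

attribute [local instance] fact_two_pi

variable {φ : ℝ → ℂ}

lemma fourier_neg_coe (m : ℤ) (x : ℝ) :
    fourier (-m) (x : AddCircle (2 * π)) = Complex.exp (-(m * x * Complex.I)) := by
  rw [fourier_coe_apply]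
  congr 1
  have h2π : ((2 * π : ℝ) : ℂ) ≠ 0 := by
    simp [Real.pi_ne_zero]
  push_cast at h2π ⊢
  field_simp

/-- Fourier coefficient of the periodic lift as an interval integral. -/
lemma fourierCoeff_lift_eq (hper : Function.Periodic φ (2 * π)) (m : ℤ) :
    fourierCoeff (hper.lift : AddCircle (2 * π) → ℂ) m
      = (1 / (2 * π) : ℝ) • ∫ x in (-π)..π, Complex.exp (-(m * x * Complex.I)) * φ x := by
  rw [fourierCoeff_eq_intervalIntegral _ m (-π)]
  have hπ : -π + 2 * π = π := by ring
  rw [hπ]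
  congr 1
  refine intervalIntegral.integral_congr fun x _ => ?_
  rw [hper.lift_coe x, smul_eq_mul, fourier_neg_coe]

/-- mean of `‖·‖²` over the circle in terms of the lift. -/
lemma integral_sq_lift (hper : Function.Periodic φ (2 * π)) :
    (∫ t, ‖(hper.lift : AddCircle (2 * π) → ℂ) t‖ ^ 2 ∂haarAddCircle)
      = (2 * π)⁻¹ * ∫ x in (-π)..π, ‖φ x‖ ^ 2 := by
  have h := AddCircle.intervalIntegral_preimage (2 * π) (-π)
    (fun t => ‖(hper.lift : AddCircle (2 * π) → ℂ) t‖ ^ 2)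
  have hπ : -π + 2 * π = π := by ring
  rw [hπ] at h
  have h2 : (∫ x in (-π)..π, ‖(hper.lift : AddCircle (2 * π) → ℂ) ↑x‖ ^ 2)
      = ∫ x in (-π)..π, ‖φ x‖ ^ 2 :=
    intervalIntegral.integral_congr fun x _ => by rw [hper.lift_coe x]
  rw [h2] at h
  have h4 : (∫ t, ‖(hper.lift : AddCircle (2 * π) → ℂ) t‖ ^ 2)
      = (2 * π) * ∫ t, ‖(hper.lift : AddCircle (2 * π) → ℂ) t‖ ^ 2 ∂haarAddCircle := by
    rw [AddCircle.volume_eq_smul_haarAddCircle, MeasureTheory.integral_smul_measure,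
      ENNReal.toReal_ofReal Real.two_pi_pos.le, smul_eq_mul]
  rw [h4] at h
  rw [h, ← mul_assoc, inv_mul_cancel₀ Real.two_pi_pos.ne', one_mul]

/-- Parseval for continuous periodic functions. -/
lemma parseval_periodic (hper : Function.Periodic φ (2 * π)) (hc : Continuous φ) :
    (∫ x in (-π)..π, ‖φ x‖ ^ 2)
        = 2 * π * ∑' m : ℤ, ‖fourierCoeff (hper.lift : AddCircle (2 * π) → ℂ) m‖ ^ 2
      ∧ Summable (fun m : ℤ =>
          ‖fourierCoeff (hper.lift : AddCircle (2 * π) → ℂ) m‖ ^ 2) := by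
  have hGc : Continuous (hper.lift : AddCircle (2 * π) → ℂ) :=
    continuous_coinduced_dom.mpr hc
  set Gc : C(AddCircle (2 * π), ℂ) := ⟨_, hGc⟩ with hGcdef
  set F := ContinuousMap.toLp (E := ℂ) 2 haarAddCircle ℂ Gc with hF
  have h1 := tsum_sq_fourierCoeff F
  have h2 : ∀ m : ℤ, fourierCoeff (F : AddCircle (2 * π) → ℂ) m
      = fourierCoeff (hper.lift : AddCircle (2 * π) → ℂ) m := fun m =>
    fourierCoeff_toLp Gc m
  have h3 : (∫ t, ‖(F : AddCircle (2 * π) → ℂ) t‖ ^ 2 ∂haarAddCircle)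
      = ∫ t, ‖(hper.lift : AddCircle (2 * π) → ℂ) t‖ ^ 2 ∂haarAddCircle := by
    refine integral_congr_ae ?_
    filter_upwards [ContinuousMap.coeFn_toLp (p := 2) haarAddCircle (𝕜 := ℂ) Gc] with t ht
    rw [ht]; rfl
  simp_rw [h2] at h1
  rw [h3] at h1
  constructor
  · rw [h1, integral_sq_lift hper, ← mul_assoc, mul_inv_cancel₀ Real.two_pi_pos.ne',
      one_mul]
  · have hmem := lp.memℓp (fourierBasis.repr F)
    have hsum := (memℓp_gen_iff (p := 2) (by norm_num)).mp hmem
    have heq : ∀ i : ℤ, ‖(fourierBasis.repr F) i‖ ^ ((2 : ℝ≥0∞).toReal)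
        = ‖fourierCoeff (hper.lift : AddCircle (2 * π) → ℂ) i‖ ^ 2 := by
      intro i
      rw [fourierBasis_repr, h2 i, show ((2 : ℝ≥0∞).toReal) = ((2:ℕ):ℝ) by norm_num,
        Real.rpow_natCast]
    exact (summable_congr heq).mp hsum

/-- Laurent coefficient (times `2πi`) of `g`, computed at the reference radius `(a+1)/2`. -/
def Wcoef (a : ℝ) (g : ℂ → ℂ) (m : ℤ) : ℂ := ∮ z in C(0, (a+1)/2), z ^ (-m-1) * g z

lemma circleIntegral_eq_coeff {g : ℂ → ℂ} (ha : 0 < a) {r : ℝ} (har : a < r) (hr1 : r < 1)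
    (m : ℤ) (hper : Function.Periodic (fun θ => g (circleMap 0 r θ)) (2 * π)) :
    (∮ z in C(0, r), z ^ (-m-1) * g z)
      = (Complex.I * (r:ℂ) ^ (-m)) *
        ((2 * π : ℝ) • fourierCoeff (hper.lift : AddCircle (2 * π) → ℂ) m) := by
  have hr0 : 0 < r := ha.trans har
  have hrc : (r:ℂ) ≠ 0 := Complex.ofReal_ne_zero.mpr hr0.ne'
  have hpt : ∀ θ : ℝ, deriv (circleMap 0 r) θ •
        ((circleMap 0 r θ) ^ (-m-1) * g (circleMap 0 r θ))
      = (Complex.I * (r:ℂ) ^ (-m)) *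
        (Complex.exp (-(m * θ * Complex.I)) * g (circleMap 0 r θ)) := by
    intro θ
    have hec : Complex.exp (θ * Complex.I) ≠ 0 := Complex.exp_ne_zero _
    rw [deriv_circleMap]
    have hcm : circleMap 0 r θ = (r:ℂ) * Complex.exp (θ * Complex.I) := by
      simp [circleMap]
    rw [smul_eq_mul, hcm]
    have hre : (r:ℂ) * Complex.exp (θ * Complex.I) ≠ 0 := mul_ne_zero hrc hec
    have key : ((r:ℂ) * Complex.exp (θ * Complex.I)) ^ (-m-1)
          * ((r:ℂ) * Complex.exp (θ * Complex.I))
        = ((r:ℂ) * Complex.exp (θ * Complex.I)) ^ (-m) := by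
      rw [← zpow_add_one₀ hre]
      congr 1
      ring
    have h7 : ((r:ℂ) * Complex.exp (θ * Complex.I)) ^ (-m)
        = (r:ℂ) ^ (-m) * Complex.exp (-((m:ℂ) * (θ:ℝ) * Complex.I)) := by
      rw [mul_zpow, ← Complex.exp_int_mul]
      congr 2
      push_cast
      ring
    calc ((r:ℂ) * Complex.exp (θ * Complex.I) * Complex.I) *
          (((r:ℂ) * Complex.exp (θ * Complex.I)) ^ (-m-1) *
            g ((r:ℂ) * Complex.exp (θ * Complex.I)))
        = Complex.I * (((r:ℂ) * Complex.exp (θ * Complex.I)) ^ (-m-1) *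
            ((r:ℂ) * Complex.exp (θ * Complex.I))) *
            g ((r:ℂ) * Complex.exp (θ * Complex.I)) := by ring
      _ = Complex.I * ((r:ℂ) * Complex.exp (θ * Complex.I)) ^ (-m) *
            g ((r:ℂ) * Complex.exp (θ * Complex.I)) := by rw [key]
      _ = Complex.I * (r:ℂ) ^ (-m) *
            (Complex.exp (-((m:ℂ) * (θ:ℝ) * Complex.I)) *
              g ((r:ℂ) * Complex.exp (θ * Complex.I))) := by rw [h7]; ring
  rw [circleIntegral]
  rw [intervalIntegral.integral_congr (fun θ _ => hpt θ)]
  rw [intervalIntegral.integral_const_mul]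
  congr 1
  have hper2 : Function.Periodic
      (fun θ : ℝ => Complex.exp (-(m * θ * Complex.I)) * g (circleMap 0 r θ)) (2 * π) := by
    intro θ
    have h1 : g (circleMap 0 r (θ + 2 * π)) = g (circleMap 0 r θ) :=
      congrArg g (periodic_circleMap 0 r θ)
    have h2 : Complex.exp (-((m:ℂ) * ((θ + 2 * π : ℝ) : ℂ) * Complex.I))
        = Complex.exp (-((m:ℂ) * (θ:ℝ) * Complex.I)) := by
      rw [show (-((m:ℂ) * ((θ + 2 * π : ℝ) : ℂ) * Complex.I))
          = -((m:ℂ) * (θ:ℝ) * Complex.I) + ((-m : ℤ) : ℂ) * (2 * (π:ℝ) * Complex.I)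
          by push_cast; ring,
        Complex.exp_add, Complex.exp_int_mul_two_pi_mul_I, mul_one]
    show Complex.exp (-((m:ℂ) * ((θ + 2 * π : ℝ) : ℂ) * Complex.I)) *
        g (circleMap 0 r (θ + 2 * π)) = _
    rw [h1, h2]
  have h3 := hper2.intervalIntegral_add_eq 0 (-π)
  rw [zero_add, show -π + 2 * π = π by ring] at h3
  rw [h3, fourierCoeff_lift_eq hper m, smul_smul]
  rw [show (2 * π) * (1 / (2 * π)) = 1 by field_simp, one_smul]

lemma circle_parseval_W {g : ℂ → ℂ} (hg : DifferentiableOn ℂ g (bigAnn a)) (ha : 0 < a)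
    {r : ℝ} (har : a < r) (hr1 : r < 1) :
    ((∫ x in (-π)..π, ‖g (circleMap 0 r x)‖ ^ 2)
      = ∑' m : ℤ, (2 * π)⁻¹ * ‖Wcoef a g m‖ ^ 2 * r ^ (2 * m))
    ∧ Summable fun m : ℤ => (2 * π)⁻¹ * ‖Wcoef a g m‖ ^ 2 * r ^ (2 * m) := by
  have hr0 : 0 < r := ha.trans har
  set φ := fun θ : ℝ => g (circleMap 0 r θ) with hφ
  have hper : Function.Periodic φ (2 * π) := fun θ => congrArg g (periodic_circleMap 0 r θ)
  have hc : Continuous φ := hg.continuousOn.comp_continuous (continuous_circleMap 0 r)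
    (circleMap_mem_bigAnn har hr1 hr0)
  obtain ⟨hpar, hsum⟩ := parseval_periodic hper hc
  have hterm : ∀ m : ℤ, (2 * π)⁻¹ * ‖Wcoef a g m‖ ^ 2 * r ^ (2 * m)
      = 2 * π * ‖fourierCoeff (hper.lift : AddCircle (2 * π) → ℂ) m‖ ^ 2 := by
    intro m
    have hmid1 : a < (a + 1) / 2 := by linarith
    have hmid2 : (a + 1) / 2 < 1 := by nlinarith [hr1, har, ha]
    have hinv : Wcoef a g m = ∮ z in C(0, r), z ^ (-m-1) * g z := by
      unfold Wcoef
      rcases le_total r ((a + 1) / 2) with hle | hle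
      · exact circleInt_invariant hg ha (-m-1) har hle hmid2
      · exact (circleInt_invariant hg ha (-m-1) hmid1 hle hr1).symm
    rw [hinv, circleIntegral_eq_coeff ha har hr1 m hper]
    rw [norm_mul, norm_mul, norm_smul]
    have h1 : ‖Complex.I‖ = 1 := by simp
    have h2 : ‖(r:ℂ) ^ (-m)‖ = r ^ (-m) := by
      rw [norm_zpow, Complex.norm_real, Real.norm_of_nonneg hr0.le]
    have h3 : ‖(2 * π : ℝ)‖ = 2 * π := Real.norm_of_nonneg Real.two_pi_pos.le
    rw [h1, h2, h3, one_mul]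
    rw [mul_pow, mul_pow]
    have h4 : (r ^ (-m)) ^ 2 = r ^ (-(2 * m)) := by
      rw [← zpow_natCast (r ^ (-m)) 2, ← zpow_mul]
      congr 1
      ring
    have h5 : r ^ (-(2 * m)) * r ^ (2 * m) = 1 := by
      rw [← zpow_add₀ hr0.ne']
      simp
    set C := ‖fourierCoeff (hper.lift : AddCircle (2 * π) → ℂ) m‖ ^ 2 with hC
    rw [h4]
    calc (2 * π)⁻¹ * (r ^ (-(2 * m)) * ((2 * π) ^ 2 * C)) * r ^ (2 * m)
        = (r ^ (-(2 * m)) * r ^ (2 * m)) * ((2 * π)⁻¹ * (2 * π) ^ 2 * C) := by ring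
      _ = (2 * π)⁻¹ * (2 * π) ^ 2 * C := by rw [h5, one_mul]
      _ = 2 * π * C := by
          rw [sq, ← mul_assoc, inv_mul_cancel₀ Real.two_pi_pos.ne', one_mul]
  constructor
  · rw [hpar]
    rw [← tsum_mul_left]
    exact tsum_congr fun m => (hterm m).symm
  · refine (summable_congr fun m => ?_).mpr (hsum.mul_left (2 * π))
    rw [hterm m]

lemma continuous_polar_symm : Continuous (fun p : ℝ × ℝ => Complex.polarCoord.symm p) := by
  have h : (fun p : ℝ × ℝ => Complex.polarCoord.symm p)
      = fun p : ℝ × ℝ => (p.1 : ℂ) * ((Real.cos p.2 : ℝ) + (Real.sin p.2 : ℝ) * Complex.I) := by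
    funext p
    exact Complex.polarCoord_symm_apply p
  rw [h]
  fun_prop

lemma annulus_to_polar {g : ℂ → ℂ} (hgm : Measurable g) {ρ₁ ρ₀ : ℝ} (h0 : 0 < ρ₁)
    (hρρ : ρ₁ < ρ₀) :
    ∫⁻ z in {z : ℂ | ρ₁ < ‖z‖ ∧ ‖z‖ < ρ₀}, (‖g z‖₊ : ℝ≥0∞) ^ 2
      = ∫⁻ r in Ioo ρ₁ ρ₀, ∫⁻ θ in Ioo (-π) π,
          ENNReal.ofReal r * (‖g (circleMap 0 r θ)‖₊ : ℝ≥0∞) ^ 2 := by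
  set ann := {z : ℂ | ρ₁ < ‖z‖ ∧ ‖z‖ < ρ₀} with hann
  have hannMeas : MeasurableSet ann := by
    have : ann = ((‖·‖ : ℂ → ℝ) ⁻¹' (Set.Ioi ρ₁)) ∩ ((‖·‖ : ℂ → ℝ) ⁻¹' (Set.Iio ρ₀)) := by
      ext z; simp [hann, Set.mem_setOf_eq]
    rw [this]
    exact ((isOpen_Ioi.preimage continuous_norm).inter
      (isOpen_Iio.preimage continuous_norm)).measurableSet
  set N : ℂ → ℝ≥0∞ := fun z => (‖g z‖₊ : ℝ≥0∞) ^ 2 with hNdef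
  have hN : Measurable N := (hgm.nnnorm.coe_nnreal_ennreal).pow_const 2
  set S : Set (ℝ × ℝ) := Ioo ρ₁ ρ₀ ×ˢ Ioo (-π) π with hS
  have hSmeas : MeasurableSet S := measurableSet_Ioo.prod measurableSet_Ioo
  have hST : S ⊆ Set.Ioi (0:ℝ) ×ˢ Set.Ioo (-π) π := fun p hp =>
    ⟨h0.trans hp.1.1, hp.2⟩
  have hTmeas : MeasurableSet (Set.Ioi (0:ℝ) ×ˢ Set.Ioo (-π) π) :=
    measurableSet_Ioi.prod measurableSet_Ioo
  have step1 : ∫⁻ z in ann, N z = ∫⁻ z, ann.indicator N z := by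
    rw [lintegral_indicator hannMeas]
  have step2 := lintegral_polar_complex (ann.indicator N)
  have hcong : ∀ p ∈ Set.Ioi (0:ℝ) ×ˢ Set.Ioo (-π) π,
      ENNReal.ofReal p.1 * (ann.indicator N) (Complex.polarCoord.symm p)
        = S.indicator (fun p : ℝ × ℝ =>
            ENNReal.ofReal p.1 * N (Complex.polarCoord.symm p)) p := by
    intro p hp
    have habs : ‖Complex.polarCoord.symm p‖ = p.1 := by
      rw [Complex.norm_polarCoord_symm, abs_of_pos hp.1]
    by_cases hmem : p.1 ∈ Ioo ρ₁ ρ₀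
    · have h1 : Complex.polarCoord.symm p ∈ ann := by
        rw [hann, Set.mem_setOf_eq, habs]; exact ⟨hmem.1, hmem.2⟩
      have h2 : p ∈ S := ⟨hmem, hp.2⟩
      rw [Set.indicator_of_mem h1, Set.indicator_of_mem h2]
    · have h1 : Complex.polarCoord.symm p ∉ ann := by
        rw [hann, Set.mem_setOf_eq, habs]
        intro hcon
        exact hmem ⟨hcon.1, hcon.2⟩
      have h2 : p ∉ S := fun hcon => hmem hcon.1
      rw [Set.indicator_of_notMem h1, Set.indicator_of_notMem h2, mul_zero]
  have step3 : (∫⁻ p in Set.Ioi (0:ℝ) ×ˢ Set.Ioo (-π) π,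
        ENNReal.ofReal p.1 * (ann.indicator N) (Complex.polarCoord.symm p))
      = ∫⁻ p in S, ENNReal.ofReal p.1 * N (Complex.polarCoord.symm p) := by
    rw [setLIntegral_congr_fun_ae hTmeas (Filter.Eventually.of_forall hcong),
      lintegral_indicator hSmeas, Measure.restrict_restrict hSmeas,
      Set.inter_eq_self_of_subset_left hST]
  have hFmeas : Measurable (fun p : ℝ × ℝ =>
      ENNReal.ofReal p.1 * N (Complex.polarCoord.symm p)) :=
    (measurable_fst.ennreal_ofReal).mul (hN.comp continuous_polar_symm.measurable)
  have step4 : (∫⁻ p in S, ENNReal.ofReal p.1 * N (Complex.polarCoord.symm p))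
      = ∫⁻ r in Ioo ρ₁ ρ₀, ∫⁻ θ in Ioo (-π) π,
          ENNReal.ofReal r * N (Complex.polarCoord.symm (r, θ)) := by
    rw [hS, Measure.volume_eq_prod, ← Measure.prod_restrict,
      MeasureTheory.lintegral_prod _ hFmeas.aemeasurable]
  rw [step1, step2, step3, step4]
  refine lintegral_congr fun r => lintegral_congr fun θ => ?_
  rw [polarCoord_symm_eq_circleMap]

lemma circle_lintegral {g : ℂ → ℂ} (hg : DifferentiableOn ℂ g (bigAnn a)) (ha : 0 < a)
    {r : ℝ} (har : a < r) (hr1 : r < 1) :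
    (∫⁻ θ in Ioo (-π) π, ENNReal.ofReal r * (‖g (circleMap 0 r θ)‖₊ : ℝ≥0∞) ^ 2)
      = ∑' m : ℤ, ENNReal.ofReal (r * ((2 * π)⁻¹ * ‖Wcoef a g m‖ ^ 2 * r ^ (2 * m))) := by
  have hr0 : 0 < r := ha.trans har
  obtain ⟨hpar, hsum⟩ := circle_parseval_W hg ha har hr1
  have hc : Continuous fun θ : ℝ => ‖g (circleMap 0 r θ)‖ ^ 2 := by
    have := (hg.continuousOn.comp_continuous (continuous_circleMap 0 r)
      (circleMap_mem_bigAnn har hr1 hr0))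
    exact (this.norm).pow 2
  have h1 : ∀ θ : ℝ, (‖g (circleMap 0 r θ)‖₊ : ℝ≥0∞) ^ 2
      = ENNReal.ofReal (‖g (circleMap 0 r θ)‖ ^ 2) := by
    intro θ
    rw [ENNReal.ofReal_pow (norm_nonneg _), ofReal_norm, enorm_eq_nnnorm]
  calc (∫⁻ θ in Ioo (-π) π, ENNReal.ofReal r * (‖g (circleMap 0 r θ)‖₊ : ℝ≥0∞) ^ 2)
      = ENNReal.ofReal r * ∫⁻ θ in Ioo (-π) π,
          ENNReal.ofReal (‖g (circleMap 0 r θ)‖ ^ 2) := by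
        simp_rw [h1]
        exact lintegral_const_mul' _ _ ENNReal.ofReal_ne_top
    _ = ENNReal.ofReal r * ENNReal.ofReal (∫ θ in Ioo (-π) π, ‖g (circleMap 0 r θ)‖ ^ 2) := by
        rw [MeasureTheory.ofReal_integral_eq_lintegral_ofReal]
        · exact (hc.integrableOn_Icc).mono_set Set.Ioo_subset_Icc_self
        · exact Filter.Eventually.of_forall fun θ => sq_nonneg _
    _ = ENNReal.ofReal r * ENNReal.ofReal
          (∑' m : ℤ, (2 * π)⁻¹ * ‖Wcoef a g m‖ ^ 2 * r ^ (2 * m)) := by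
        rw [intervalIntegral.integral_of_le (by linarith [Real.pi_pos] : -π ≤ π),
          MeasureTheory.integral_Ioc_eq_integral_Ioo] at hpar
        rw [hpar]
    _ = ∑' m : ℤ, ENNReal.ofReal (r * ((2 * π)⁻¹ * ‖Wcoef a g m‖ ^ 2 * r ^ (2 * m))) := by
        rw [ENNReal.ofReal_tsum_of_nonneg (fun m => by positivity) hsum,
          ← ENNReal.tsum_mul_left]
        exact tsum_congr fun m => by
          rw [← ENNReal.ofReal_mul hr0.le]

lemma mode_integral {c : ℝ} (hc : 0 ≤ c) (m : ℤ) {ρ₁ ρ₀ : ℝ} (h0 : 0 < ρ₁) (hρρ : ρ₁ < ρ₀) :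
    (∫⁻ r in Ioo ρ₁ ρ₀, ENNReal.ofReal (r * (c * r ^ (2 * m))))
      = ENNReal.ofReal (c * ∫ r in ρ₁..ρ₀, r ^ (2 * m + 1)) := by
  have hzpow : ∀ x ∈ Icc ρ₁ ρ₀, ContinuousWithinAt (fun r : ℝ => r * (c * r ^ (2 * m)))
      (Icc ρ₁ ρ₀) x := by
    intro x hx
    have hx0 : x ≠ 0 := (h0.trans_le hx.1).ne'
    exact (continuousWithinAt_id.mul (continuousWithinAt_const.mul
      ((continuousAt_zpow₀ x (2 * m) (Or.inl hx0)).continuousWithinAt)))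
  have hcont : ContinuousOn (fun r : ℝ => r * (c * r ^ (2 * m))) (Icc ρ₁ ρ₀) := hzpow
  have hint : IntegrableOn (fun r : ℝ => r * (c * r ^ (2 * m))) (Ioo ρ₁ ρ₀) :=
    (hcont.integrableOn_Icc).mono_set Set.Ioo_subset_Icc_self
  have hnn : 0 ≤ᵐ[volume.restrict (Ioo ρ₁ ρ₀)] fun r : ℝ => r * (c * r ^ (2 * m)) := by
    refine (ae_restrict_iff' measurableSet_Ioo).mpr (Filter.Eventually.of_forall fun r hr => ?_)
    have hr0 : 0 < r := h0.trans hr.1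
    positivity
  rw [← MeasureTheory.ofReal_integral_eq_lintegral_ofReal hint hnn]
  congr 1
  rw [intervalIntegral.integral_of_le hρρ.le, MeasureTheory.integral_Ioc_eq_integral_Ioo,
    ← MeasureTheory.integral_const_mul]
  refine setIntegral_congr_fun measurableSet_Ioo fun r hr => ?_
  have hr0 : r ≠ 0 := (h0.trans hr.1).ne'
  rw [zpow_add_one₀ hr0]
  ring

lemma annulus_decomp {g : ℂ → ℂ} (hg : DifferentiableOn ℂ g (bigAnn a)) (ha : 0 < a)
    (hgm : Measurable g) {ρ₁ ρ₀ : ℝ} (haρ : a ≤ ρ₁) (hρρ : ρ₁ < ρ₀) (hρ1 : ρ₀ ≤ 1) :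
    ∫⁻ z in {z : ℂ | ρ₁ < ‖z‖ ∧ ‖z‖ < ρ₀}, (‖g z‖₊ : ℝ≥0∞) ^ 2
      = ∑' m : ℤ, ENNReal.ofReal
          ((2 * π)⁻¹ * ‖Wcoef a g m‖ ^ 2 * ∫ r in ρ₁..ρ₀, r ^ (2 * m + 1)) := by
  have h0 : 0 < ρ₁ := ha.trans_le haρ
  rw [annulus_to_polar hgm h0 hρρ]
  have hinner : ∀ r ∈ Ioo ρ₁ ρ₀,
      (∫⁻ θ in Ioo (-π) π, ENNReal.ofReal r * (‖g (circleMap 0 r θ)‖₊ : ℝ≥0∞) ^ 2)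
        = ∑' m : ℤ, ENNReal.ofReal
            (r * ((2 * π)⁻¹ * ‖Wcoef a g m‖ ^ 2 * r ^ (2 * m))) := fun r hr =>
    circle_lintegral hg ha (haρ.trans_lt hr.1) (hr.2.trans_le hρ1)
  rw [setLIntegral_congr_fun_ae measurableSet_Ioo (Filter.Eventually.of_forall hinner)]
  rw [lintegral_tsum]
  · exact tsum_congr fun m =>
      mode_integral (by positivity) m h0 hρρ
  · intro m
    refine (ENNReal.continuous_ofReal.comp_continuousOn ?_).aemeasurable measurableSet_Ioo
    intro x hx
    have hx0 : x ≠ 0 := (h0.trans hx.1).ne'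
    exact (continuousWithinAt_id.mul (continuousWithinAt_const.mul
      ((continuousAt_zpow₀ x (2 * m) (Or.inl hx0)).continuousWithinAt)))

lemma Wcoef_neg_one_eq_zero {g P : ℂ → ℂ} (ha : 0 < a) (ha1 : a < 1)
    (hP : ∀ z ∈ bigAnn a, HasDerivAt P (g z) z) (hFc : ContinuousOn g (bigAnn a)) :
    Wcoef a g (-1) = 0 := by
  have h1 : (fun z : ℂ => z ^ (-(-1:ℤ)-1) * g z) = g := by
    funext z
    norm_num
  unfold Wcoef
  rw [h1]
  exact circleInt_of_primitive_eq_zero hP hFc (by linarith) (by linarith)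
    (by linarith)

lemma exp_zpow (x : ℝ) (n : ℤ) : Real.exp x ^ n = Real.exp (n * x) := by
  rw [← Real.rpow_intCast, Real.rpow_def_of_pos (Real.exp_pos x), Real.log_exp, mul_comm]

/-- the mode integral over the annulus `A k` -/
def Jfun (k : ℕ) (m : ℤ) : ℝ :=
  ∫ r in Real.exp (-((k:ℝ)+1))..Real.exp (-(k:ℝ)), r ^ (2 * m + 1)

lemma Jfun_nonneg (k : ℕ) (m : ℤ) : 0 ≤ Jfun k m := by
  refine intervalIntegral.integral_nonneg (Real.exp_le_exp.mpr (by linarith)) fun x hx => ?_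
  have hx0 : 0 < x := lt_of_lt_of_le (Real.exp_pos _) hx.1
  positivity

lemma Jfun_eval (k : ℕ) (m : ℤ) (hm : m ≠ -1) :
    Jfun k m = Real.exp (-2 * (k:ℝ) * ((m:ℝ)+1)) * (1 - Real.exp (-2 * ((m:ℝ)+1)))
      / (2 * ((m:ℝ)+1)) := by
  have h1 : (2 * m + 1 : ℤ) ≠ -1 := by omega
  have h2 : (0:ℝ) ∉ Set.uIcc (Real.exp (-((k:ℝ)+1))) (Real.exp (-(k:ℝ))) := by
    rw [Set.uIcc_of_le (Real.exp_le_exp.mpr (by linarith))]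
    intro hc
    exact absurd hc.1 (not_le.mpr (Real.exp_pos _))
  rw [Jfun, integral_zpow (Or.inr ⟨h1, h2⟩)]
  rw [show (2 * m + 1 + 1 : ℤ) = 2 * (m + 1) by ring]
  rw [exp_zpow, exp_zpow]
  have hcast : ((2 * (m + 1) : ℤ) : ℝ) = 2 * ((m:ℝ) + 1) := by push_cast; ring
  rw [hcast]
  rw [show (2 * ((m:ℝ)+1)) * -((k:ℝ)+1) = -2 * (k:ℝ) * ((m:ℝ)+1) + (-2 * ((m:ℝ)+1)) by ring,
    show (2 * ((m:ℝ)+1)) * -(k:ℝ) = -2 * (k:ℝ) * ((m:ℝ)+1) by ring,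
    Real.exp_add]
  have : ((2 * m + 1 : ℤ) : ℝ) + 1 = 2 * ((m:ℝ) + 1) := by push_cast; ring
  rw [this]
  ring

lemma Jfun_ineq (m : ℤ) (hm : m ≠ -1) (k : ℕ) :
    Jfun (k+1) m ≤ Real.exp (-2) * (Jfun k m + Jfun (k+2) m) := by
  set s : ℝ := (m:ℝ) + 1 with hs
  have hs1 : 1 ≤ |s| := by
    rcases lt_or_ge m (-1) with h | h
    · have : (m:ℝ) ≤ -2 := by exact_mod_cast (by omega : m ≤ -2)
      rw [_root_.abs_of_nonpos (by linarith)]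
      linarith
    · have : (1:ℝ) ≤ (m:ℝ) + 1 := by
        have : (0:ℝ) ≤ (m:ℝ) := by exact_mod_cast (by omega : 0 ≤ m)
        linarith
      rw [_root_.abs_of_nonneg (by linarith)]
      linarith
  set D : ℝ := (1 - Real.exp (-2 * s)) / (2 * s) with hD
  have hDnn : 0 ≤ D := by
    rcases abs_cases s with ⟨habs, hsgn⟩ | ⟨habs, hsgn⟩
    · have hspos : 1 ≤ s := habs ▸ hs1
      have : Real.exp (-2 * s) < 1 := by
        rw [show (1:ℝ) = Real.exp 0 by simp]
        exact Real.exp_lt_exp.mpr (by nlinarith)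
      apply div_nonneg <;> nlinarith
    · have hsneg : s ≤ -1 := by linarith [habs ▸ hs1]
      have : 1 < Real.exp (-2 * s) := by
        rw [show (1:ℝ) = Real.exp 0 by simp]
        exact Real.exp_lt_exp.mpr (by nlinarith)
      rw [div_nonneg_iff]
      right
      constructor <;> nlinarith
  have heval : ∀ j : ℕ, Jfun j m = Real.exp (-2 * (j:ℝ) * s) * D := by
    intro j
    rw [Jfun_eval j m hm, hD, hs]
    ring
  rw [heval, heval, heval]
  have hkey : Real.exp (-2 * ((k:ℝ)+1) * s)
      ≤ Real.exp (-2) * (Real.exp (-2 * (k:ℝ) * s) + Real.exp (-2 * ((k:ℝ)+2) * s)) := by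
    have e1 : Real.exp (-2 * (k:ℝ) * s)
        = Real.exp (-2 * ((k:ℝ)+1) * s) * Real.exp (2 * s) := by
      rw [← Real.exp_add]; congr 1; ring
    have e2 : Real.exp (-2 * ((k:ℝ)+2) * s)
        = Real.exp (-2 * ((k:ℝ)+1) * s) * Real.exp (-(2 * s)) := by
      rw [← Real.exp_add]; congr 1; ring
    rw [e1, e2]
    have hsum : Real.exp 2 ≤ Real.exp (2 * s) + Real.exp (-(2 * s)) := by
      rcases abs_cases s with ⟨habs, hsgn⟩ | ⟨habs, hsgn⟩
      · have : 1 ≤ s := habs ▸ hs1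
        have h1 : Real.exp 2 ≤ Real.exp (2 * s) := Real.exp_le_exp.mpr (by nlinarith)
        linarith [Real.exp_pos (-(2 * s))]
      · have : s ≤ -1 := by linarith [habs ▸ hs1]
        have h1 : Real.exp 2 ≤ Real.exp (-(2 * s)) := Real.exp_le_exp.mpr (by nlinarith)
        linarith [Real.exp_pos (2 * s)]
    have hE := Real.exp_pos (-2 * ((k:ℝ)+1) * s)
    have hinv : Real.exp (-2) * Real.exp 2 = 1 := by
      rw [← Real.exp_add]; norm_num
    have h2 := Real.exp_pos (-2 : ℝ)
    nlinarith [mul_le_mul_of_nonneg_left hsum (le_of_lt (mul_pos h2 hE))]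
  have hcast1 : ((k+1 : ℕ) : ℝ) = (k:ℝ) + 1 := by push_cast; ring
  have hcast2 : ((k+2 : ℕ) : ℝ) = (k:ℝ) + 2 := by push_cast; ring
  rw [hcast1, hcast2]
  calc Real.exp (-2 * ((k:ℝ)+1) * s) * D
      ≤ (Real.exp (-2) * (Real.exp (-2 * (k:ℝ) * s) + Real.exp (-2 * ((k:ℝ)+2) * s))) * D :=
        mul_le_mul_of_nonneg_right hkey hDnn
    _ = Real.exp (-2) * (Real.exp (-2 * (k:ℝ) * s) * D + Real.exp (-2 * ((k:ℝ)+2) * s) * D) := by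
        ring

lemma exp_two_ge_three : (3:ℝ) ≤ Real.exp 2 := by
  have := Real.add_one_le_exp (2:ℝ)
  linarith

lemma lamConst_facts : 1 ≤ lamConst ∧ 0 < lamConst ∧
    lamConst ^ 2 + 1 = Real.exp 2 * lamConst := by
  have he4 : Real.exp 4 = Real.exp 2 * Real.exp 2 := by
    rw [← Real.exp_add]; norm_num
  have h4 : (0:ℝ) ≤ Real.exp 4 - 4 := by nlinarith [exp_two_ge_three]
  have hB : Real.sqrt (Real.exp 4 - 4) ^ 2 = Real.exp 4 - 4 := Real.sq_sqrt h4
  have hBnn : 0 ≤ Real.sqrt (Real.exp 4 - 4) := Real.sqrt_nonneg _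
  have h1 : 1 ≤ lamConst := by
    unfold lamConst
    nlinarith [exp_two_ge_three]
  refine ⟨h1, by linarith, ?_⟩
  unfold lamConst
  field_simp
  nlinarith [hB, he4]

lemma lamConst_key (j : ℤ) :
    Real.exp (-2) * (lamConst ^ (j+1) + lamConst ^ (j-1)) = lamConst ^ j := by
  obtain ⟨h1, h0, hquad⟩ := lamConst_facts
  have hne : lamConst ≠ 0 := h0.ne'
  rw [zpow_add_one₀ hne, zpow_sub_one₀ hne]
  have hinv : Real.exp (-2) = (Real.exp 2)⁻¹ := Real.exp_neg 2
  rw [hinv]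
  have he2 : Real.exp 2 ≠ 0 := (Real.exp_pos 2).ne'
  field_simp
  linear_combination hquad

lemma recursion_lemma (x : ℕ → ℝ) (N : ℕ) (hN : 1 ≤ N)
    (hnn : ∀ k, 0 ≤ x k)
    (hrec : ∀ k, 1 ≤ k → k ≤ N → x k ≤ Real.exp (-2) * (x (k-1) + x (k+1))) :
    ∀ k, 1 ≤ k → k ≤ N →
      x k ≤ lamConst ^ (1 - (k:ℤ)) * x 1 + lamConst ^ ((k:ℤ) - N) * x N := by
  obtain ⟨hl1, hl0, _⟩ := lamConst_facts
  set b : ℕ → ℝ := fun k => lamConst ^ (1 - (k:ℤ)) * x 1 + lamConst ^ ((k:ℤ) - N) * x N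
    with hbdef
  have hb : ∀ k : ℕ, 1 ≤ k → Real.exp (-2) * (b (k-1) + b (k+1)) = b k := by
    intro k hk
    have hc1 : ((k - 1 : ℕ) : ℤ) = (k:ℤ) - 1 := by
      have : 1 ≤ k := hk
      push_cast [Nat.cast_sub this]
      ring
    simp only [hbdef, hc1]
    push_cast
    have e1 : (1 - ((k:ℤ) - 1)) = (1 - (k:ℤ)) + 1 := by ring
    have e2 : (1 - ((k:ℤ) + 1)) = (1 - (k:ℤ)) - 1 := by ring
    have e3 : (((k:ℤ) - 1) - N) = ((k:ℤ) - N) - 1 := by ring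
    have e4 : (((k:ℤ) + 1) - N) = ((k:ℤ) - N) + 1 := by ring
    rw [e1, e2, e3, e4]
    have k1 := lamConst_key (1 - (k:ℤ))
    have k2 := lamConst_key ((k:ℤ) - N)
    linear_combination x 1 * k1 + x N * k2
  intro k hk1 hkN
  -- max principle
  obtain ⟨k₀, hk₀mem, hmax⟩ := (Finset.Icc 1 N).exists_max_image (fun j => x j - b j)
    ⟨1, Finset.mem_Icc.mpr ⟨le_refl 1, hN⟩⟩
  rw [Finset.mem_Icc] at hk₀mem
  have hMle : x k₀ - b k₀ ≤ 0 := by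
    by_cases hA : k₀ = 1
    · have hb1 : b 1 = x 1 + lamConst ^ ((1:ℤ) - N) * x N := by
        simp [hbdef]
      rw [hA, hb1]
      have : 0 ≤ lamConst ^ ((1:ℤ) - N) * x N :=
        mul_nonneg (le_of_lt (zpow_pos hl0 _)) (hnn N)
      linarith
    · by_cases hB : k₀ = N
      · have hbN : b N = lamConst ^ (1 - (N:ℤ)) * x 1 + x N := by
          simp [hbdef]
        rw [hB, hbN]
        have : 0 ≤ lamConst ^ (1 - (N:ℤ)) * x 1 :=
          mul_nonneg (le_of_lt (zpow_pos hl0 _)) (hnn 1)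
        linarith
      · have hk₀1 : 1 ≤ k₀ := hk₀mem.1
        have hk₀2 : 2 ≤ k₀ := by omega
        have hk₀N : k₀ + 1 ≤ N := by omega
        have hm1 : k₀ - 1 ∈ Finset.Icc 1 N := Finset.mem_Icc.mpr ⟨by omega, by omega⟩
        have hm2 : k₀ + 1 ∈ Finset.Icc 1 N := Finset.mem_Icc.mpr ⟨by omega, by omega⟩
        have h1 := hmax _ hm1
        have h2 := hmax _ hm2
        have h3 := hrec k₀ hk₀1 hk₀mem.2
        have h4 := hb k₀ hk₀1
        have hexp : (0:ℝ) ≤ Real.exp (-2) := (Real.exp_pos _).le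
        have hd1 : Real.exp (-2) * ((x (k₀-1) + x (k₀+1)) - (b (k₀-1) + b (k₀+1)))
            = Real.exp (-2) * (x (k₀-1) + x (k₀+1))
              - Real.exp (-2) * (b (k₀-1) + b (k₀+1)) := mul_sub _ _ _
        have hd2 := mul_le_mul_of_nonneg_left
          (show (x (k₀-1) + x (k₀+1)) - (b (k₀-1) + b (k₀+1)) ≤ 2 * (x k₀ - b k₀) by
            linarith) hexp
        have hfin : x k₀ - b k₀ ≤ Real.exp (-2) * (2 * (x k₀ - b k₀)) := by linarith
        have hsmall : Real.exp (-2) * 2 < 1 := by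
          have hinv : Real.exp (-2) = (Real.exp 2)⁻¹ := Real.exp_neg 2
          rw [hinv]
          have h3' := exp_two_ge_three
          have hpos := Real.exp_pos 2
          rw [inv_mul_lt_iff₀ hpos]
          linarith
        by_contra hM
        push_neg at hM
        nlinarith [hfin, mul_lt_mul_of_pos_right hsmall hM]
  have h5 := hmax k (Finset.mem_Icc.mpr ⟨hk1, hkN⟩)
  have h6 : x k ≤ b k := by linarith
  simpa [hbdef] using h6

/-- geometric decay of annular energies of a holomorphic map of a
long annulus (Corollary 3.5 in the holomorphic model case). -/
theorem stmt5 (n : ℕ) (hn : 1 ≤ n) (l : ℕ) (hl : 3 ≤ l)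
    (u : ℂ → EuclideanSpace ℂ (Fin n))
    (hu : DifferentiableOn ℂ u
      {z : ℂ | Real.exp (-(l : ℝ)) < ‖z‖ ∧ ‖z‖ < 1})
    (hfin : ∀ k, k ≤ l - 1 → annEnergy n u k ≠ ⊤) :
    ∀ k, 1 ≤ k → k ≤ l - 2 →
      annEnergy n u k ≤
        ENNReal.ofReal (lamConst ^ (-((k : ℤ) - 1))) * annEnergy n u 1 +
          ENNReal.ofReal (lamConst ^ (-((l : ℤ) - 2 - (k : ℤ)))) * annEnergy n u (l - 2) := by
  intro k hk1 hk2
  set a : ℝ := Real.exp (-(l : ℝ)) with hadef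
  have ha : 0 < a := Real.exp_pos _
  have hl0' : (0:ℝ) < (l:ℝ) := by exact_mod_cast (by omega : 0 < l)
  have ha1 : a < 1 := by
    rw [hadef, show (1:ℝ) = Real.exp 0 by simp]
    exact Real.exp_lt_exp.mpr (by linarith)
  have hu' : DifferentiableOn ℂ u (bigAnn a) := hu
  have hfd : DifferentiableOn ℂ (deriv u) (bigAnn a) :=
    ((hu'.analyticOnNhd (isOpen_bigAnn a)).deriv).differentiableOn
  set v : Fin n → ℂ → ℂ := fun j z => deriv u z j with hvdef
  letI : MeasurableSpace (EuclideanSpace ℂ (Fin n)) := borel _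
  haveI : BorelSpace (EuclideanSpace ℂ (Fin n)) := ⟨rfl⟩
  have hvdiff : ∀ j, DifferentiableOn ℂ (v j) (bigAnn a) := fun j =>
    (EuclideanSpace.proj (𝕜 := ℂ) j).differentiable.comp_differentiableOn hfd
  have hvmeas : ∀ j, Measurable (v j) := fun j =>
    ((EuclideanSpace.proj (𝕜 := ℂ) j).continuous.measurable).comp (measurable_deriv u)
  have hprim : ∀ j, ∀ z ∈ bigAnn a,
      HasDerivAt (fun w => EuclideanSpace.proj (𝕜 := ℂ) j (u w)) (v j z) z := by
    intro j z hz
    have hud : HasDerivAt u (deriv u z) z :=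
      (hu'.differentiableAt ((isOpen_bigAnn a).mem_nhds hz)).hasDerivAt
    exact (EuclideanSpace.proj (𝕜 := ℂ) j).hasFDerivAt.comp_hasDerivAt z hud
  have hW : ∀ j, Wcoef a (v j) (-1) = 0 := fun j =>
    Wcoef_neg_one_eq_zero ha ha1 (hprim j) ((hvdiff j).continuousOn)
  have hsplit : ∀ k : ℕ, annEnergy n u k
      = ∑ j : Fin n, ∫⁻ z in annulusAk k, (‖v j z‖₊ : ℝ≥0∞) ^ 2 := by
    intro k
    have hpt : ∀ z : ℂ, (‖deriv u z‖₊ : ℝ≥0∞) ^ 2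
        = ∑ j : Fin n, (‖v j z‖₊ : ℝ≥0∞) ^ 2 := by
      intro z
      have hnorm : ‖deriv u z‖ ^ 2 = ∑ j : Fin n, ‖deriv u z j‖ ^ 2 := by
        rw [EuclideanSpace.norm_eq,
          Real.sq_sqrt (Finset.sum_nonneg fun j _ => sq_nonneg _)]
      calc (‖deriv u z‖₊ : ℝ≥0∞) ^ 2 = ENNReal.ofReal (‖deriv u z‖ ^ 2) := by
            rw [ENNReal.ofReal_pow (norm_nonneg _), ofReal_norm, enorm_eq_nnnorm]
        _ = ∑ j : Fin n, ENNReal.ofReal (‖deriv u z j‖ ^ 2) := by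
            rw [hnorm, ENNReal.ofReal_sum_of_nonneg (fun j _ => sq_nonneg _)]
        _ = ∑ j : Fin n, (‖v j z‖₊ : ℝ≥0∞) ^ 2 := Finset.sum_congr rfl fun j _ => by
            rw [ENNReal.ofReal_pow (norm_nonneg _), ofReal_norm, enorm_eq_nnnorm]
    unfold annEnergy
    rw [lintegral_congr hpt,
      MeasureTheory.lintegral_finset_sum _ (fun j _ =>
        (((hvmeas j).nnnorm.coe_nnreal_ennreal).pow_const 2))]
  have hQdecomp : ∀ (j : Fin n) (k : ℕ), k + 1 ≤ l →
      (∫⁻ z in annulusAk k, (‖v j z‖₊ : ℝ≥0∞) ^ 2)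
        = ∑' m : ℤ, ENNReal.ofReal
            ((2 * π)⁻¹ * ‖Wcoef a (v j) m‖ ^ 2 * Jfun k m) := by
    intro j k hk
    have hkl : ((k:ℝ) + 1) ≤ (l:ℝ) := by exact_mod_cast hk
    have haρ : a ≤ Real.exp (-((k:ℝ) + 1)) := Real.exp_le_exp.mpr (by linarith)
    have hρρ : Real.exp (-((k:ℝ) + 1)) < Real.exp (-(k:ℝ)) :=
      Real.exp_lt_exp.mpr (by linarith)
    have hρ1 : Real.exp (-(k:ℝ)) ≤ 1 := by
      rw [show (1:ℝ) = Real.exp 0 by simp]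
      exact Real.exp_le_exp.mpr (neg_nonpos.mpr (Nat.cast_nonneg k))
    exact annulus_decomp (hvdiff j) ha (hvmeas j) haρ hρρ hρ1
  have hQstep : ∀ (j : Fin n) (k : ℕ), k + 3 ≤ l →
      (∫⁻ z in annulusAk (k+1), (‖v j z‖₊ : ℝ≥0∞) ^ 2)
        ≤ ENNReal.ofReal (Real.exp (-2)) *
            ((∫⁻ z in annulusAk k, (‖v j z‖₊ : ℝ≥0∞) ^ 2)
              + ∫⁻ z in annulusAk (k+2), (‖v j z‖₊ : ℝ≥0∞) ^ 2) := by
    intro j k hk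
    rw [hQdecomp j k (by omega), hQdecomp j (k+1) (by omega), hQdecomp j (k+2) (by omega),
      ← ENNReal.tsum_add, ← ENNReal.tsum_mul_left]
    refine ENNReal.tsum_le_tsum fun m => ?_
    by_cases hm : m = -1
    · subst hm
      rw [hW j]
      simp
    · set c := (2 * π)⁻¹ * ‖Wcoef a (v j) m‖ ^ 2 with hc
      have hcnn : 0 ≤ c := by positivity
      have hineq := Jfun_ineq m hm k
      have hreal : c * Jfun (k+1) m
          ≤ Real.exp (-2) * (c * Jfun k m + c * Jfun (k+2) m) := by
        calc c * Jfun (k+1) m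
            ≤ c * (Real.exp (-2) * (Jfun k m + Jfun (k+2) m)) :=
              mul_le_mul_of_nonneg_left hineq hcnn
          _ = Real.exp (-2) * (c * Jfun k m + c * Jfun (k+2) m) := by ring
      calc ENNReal.ofReal (c * Jfun (k+1) m)
          ≤ ENNReal.ofReal (Real.exp (-2) * (c * Jfun k m + c * Jfun (k+2) m)) :=
            ENNReal.ofReal_le_ofReal hreal
        _ = ENNReal.ofReal (Real.exp (-2)) *
              (ENNReal.ofReal (c * Jfun k m) + ENNReal.ofReal (c * Jfun (k+2) m)) := by
            rw [ENNReal.ofReal_mul (Real.exp_pos _).le,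
              ENNReal.ofReal_add (mul_nonneg hcnn (Jfun_nonneg _ _))
                (mul_nonneg hcnn (Jfun_nonneg _ _))]
  have hEstep : ∀ k : ℕ, k + 3 ≤ l →
      annEnergy n u (k+1) ≤ ENNReal.ofReal (Real.exp (-2)) *
        (annEnergy n u k + annEnergy n u (k+2)) := by
    intro k hk
    rw [hsplit (k+1), hsplit k, hsplit (k+2)]
    calc (∑ j : Fin n, ∫⁻ z in annulusAk (k+1), (‖v j z‖₊ : ℝ≥0∞) ^ 2)
        ≤ ∑ j : Fin n, ENNReal.ofReal (Real.exp (-2)) *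
            ((∫⁻ z in annulusAk k, (‖v j z‖₊ : ℝ≥0∞) ^ 2)
              + ∫⁻ z in annulusAk (k+2), (‖v j z‖₊ : ℝ≥0∞) ^ 2) :=
          Finset.sum_le_sum fun j _ => hQstep j k hk
      _ = ENNReal.ofReal (Real.exp (-2)) *
            ((∑ j : Fin n, ∫⁻ z in annulusAk k, (‖v j z‖₊ : ℝ≥0∞) ^ 2)
              + ∑ j : Fin n, ∫⁻ z in annulusAk (k+2), (‖v j z‖₊ : ℝ≥0∞) ^ 2) := by
          rw [← Finset.mul_sum, ← Finset.sum_add_distrib]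
  set x : ℕ → ℝ := fun k => (annEnergy n u k).toReal with hxdef
  set N : ℕ := l - 2 with hNdef
  have hN : 1 ≤ N := by omega
  have hxnn : ∀ k, 0 ≤ x k := fun k => ENNReal.toReal_nonneg
  have hxrec : ∀ k, 1 ≤ k → k ≤ N → x k ≤ Real.exp (-2) * (x (k-1) + x (k+1)) := by
    intro k hk1' hkN
    have hE := hEstep (k-1) (by omega)
    rw [show (k-1)+1 = k by omega, show (k-1)+2 = k+1 by omega] at hE
    have hfin1 : annEnergy n u (k-1) ≠ ⊤ := hfin _ (by omega)
    have hfin2 : annEnergy n u (k+1) ≠ ⊤ := hfin _ (by omega)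
    have hRHS : ENNReal.ofReal (Real.exp (-2)) *
        (annEnergy n u (k-1) + annEnergy n u (k+1)) ≠ ⊤ :=
      ENNReal.mul_ne_top ENNReal.ofReal_ne_top (ENNReal.add_ne_top.mpr ⟨hfin1, hfin2⟩)
    have hmono := ENNReal.toReal_mono hRHS hE
    rwa [ENNReal.toReal_mul, ENNReal.toReal_ofReal (Real.exp_pos _).le,
      ENNReal.toReal_add hfin1 hfin2] at hmono
  have hxb := recursion_lemma x N hN hxnn hxrec k hk1 (by omega)
  obtain ⟨hlam1, hlam0, _⟩ := lamConst_facts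
  have hEk : annEnergy n u k = ENNReal.ofReal (x k) :=
    (ENNReal.ofReal_toReal (hfin k (by omega))).symm
  have hE1 : ENNReal.ofReal (x 1) = annEnergy n u 1 :=
    ENNReal.ofReal_toReal (hfin 1 (by omega))
  have hEN : ENNReal.ofReal (x N) = annEnergy n u (l-2) :=
    ENNReal.ofReal_toReal (hfin (l-2) (by omega))
  have hcastN : ((N:ℕ):ℤ) = (l:ℤ) - 2 := by
    rw [hNdef]
    push_cast [Nat.cast_sub (by omega : 2 ≤ l)]
    ring
  rw [hEk]
  calc ENNReal.ofReal (x k)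
      ≤ ENNReal.ofReal (lamConst ^ (1 - (k:ℤ)) * x 1 + lamConst ^ ((k:ℤ) - N) * x N) :=
        ENNReal.ofReal_le_ofReal hxb
    _ = ENNReal.ofReal (lamConst ^ (1 - (k:ℤ))) * ENNReal.ofReal (x 1)
        + ENNReal.ofReal (lamConst ^ ((k:ℤ) - N)) * ENNReal.ofReal (x N) := by
        rw [ENNReal.ofReal_add (mul_nonneg (zpow_pos hlam0 _).le (hxnn 1))
            (mul_nonneg (zpow_pos hlam0 _).le (hxnn N)),
          ENNReal.ofReal_mul (zpow_pos hlam0 _).le,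
          ENNReal.ofReal_mul (zpow_pos hlam0 _).le]
    _ = ENNReal.ofReal (lamConst ^ (-((k:ℤ) - 1))) * annEnergy n u 1
        + ENNReal.ofReal (lamConst ^ (-((l:ℤ) - 2 - (k:ℤ)))) * annEnergy n u (l-2) := by
        rw [hE1, hEN, show (1 - (k:ℤ)) = -((k:ℤ) - 1) by ring,
          show ((k:ℤ) - (N:ℤ)) = -((l:ℤ) - 2 - (k:ℤ)) by rw [hcastN]; ring]
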